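/- Let A, B, c ∈ ℝ satisfy A² − B² = 2c², set μ = c², and define u₁(x) = A·sech(cx) and u₂(x) = B·sech(cx). Then (u₁, u₂) satisfies the stationary focusing-defocusing coupled NLS system: u₁''(x) + (u₁(x)² − u₂(x)²)u₁(x) − μu₁(x) = 0 and u₂''(x) + (u₁(x)² − u₂(x)²)u₂(x) − μu₂(x) = 0 for all x ∈ ℝ. -/

import Mathlib

private lemma sech_deriv1 (K c : ℝ) (x : ℝ) :
    HasDerivAt (fun x => K * (1 / Real.cosh (c * x)))
      (K * (-(Real.sinh (c * x) * c) / Real.cosh (c * x) ^ 2)) x := by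
  have h1 : HasDerivAt (fun x : ℝ => Real.cosh (c * x)) (Real.sinh (c * x) * c) x := by
    simpa using ((hasDerivAt_id x).const_mul c).cosh
  have h2 := h1.inv (Real.cosh_pos (c * x)).ne'
  simpa [one_div] using h2.const_mul K

private lemma sech_deriv2 (K c : ℝ) (x : ℝ) :
    HasDerivAt (fun x => K * (-(Real.sinh (c * x) * c) / Real.cosh (c * x) ^ 2))
      (K * (c ^ 2 * (1 / Real.cosh (c * x)) - 2 * c ^ 2 * (1 / Real.cosh (c * x)) ^ 3)) x := by
  have hc : HasDerivAt (fun x : ℝ => Real.cosh (c * x)) (Real.sinh (c * x) * c) x := by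
    simpa using ((hasDerivAt_id x).const_mul c).cosh
  have hs : HasDerivAt (fun x : ℝ => Real.sinh (c * x)) (Real.cosh (c * x) * c) x := by
    simpa using ((hasDerivAt_id x).const_mul c).sinh
  have hnum : HasDerivAt (fun x : ℝ => -(Real.sinh (c * x) * c))
      (-(Real.cosh (c * x) * c * c)) x := by
    exact (hs.mul_const c).neg.congr_deriv (by ring)
  have hden : HasDerivAt (fun x : ℝ => Real.cosh (c * x) ^ 2)
      (2 * Real.cosh (c * x) ^ 1 * (Real.sinh (c * x) * c)) x := by
    exact (hc.pow 2).congr_deriv (by norm_num)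
  have hcosh := (Real.cosh_pos (c * x)).ne'
  have hdiv := (hnum.div hden (by positivity)).const_mul K
  refine hdiv.congr_deriv ?_
  have hsq : Real.sinh (c * x) ^ 2 = Real.cosh (c * x) ^ 2 - 1 := by
    have := Real.cosh_sq (c * x); linarith
  field_simp
  linear_combination (2 * K * c ^ 2) * hsq

private lemma sech_key (K c : ℝ) (x : ℝ) :
    deriv (deriv (fun x => K * (1 / Real.cosh (c * x)))) x
      = K * (c ^ 2 * (1 / Real.cosh (c * x)) - 2 * c ^ 2 * (1 / Real.cosh (c * x)) ^ 3) := by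
  have h1 : deriv (fun x => K * (1 / Real.cosh (c * x)))
      = fun x => K * (-(Real.sinh (c * x) * c) / Real.cosh (c * x) ^ 2) := by
    funext y; exact (sech_deriv1 K c y).deriv
  rw [h1]
  exact (sech_deriv2 K c x).deriv

/-- The exact single-soliton solutions `u₁ = A sech(cx)`, `u₂ = B sech(cx)` with
`A² − B² = 2c²` and `μ = c²` solve the stationary focusing-defocusing coupled NLS system. -/
theorem stmt_9 (A B c : ℝ) (hABc : A ^ 2 - B ^ 2 = 2 * c ^ 2) (μ : ℝ) (hμ : μ = c ^ 2)
    (u₁ u₂ : ℝ → ℝ)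
    (hu₁ : ∀ x, u₁ x = A * (1 / Real.cosh (c * x)))
    (hu₂ : ∀ x, u₂ x = B * (1 / Real.cosh (c * x))) :
    (∀ x, deriv (deriv u₁) x + (u₁ x ^ 2 - u₂ x ^ 2) * u₁ x - μ * u₁ x = 0) ∧
    (∀ x, deriv (deriv u₂) x + (u₁ x ^ 2 - u₂ x ^ 2) * u₂ x - μ * u₂ x = 0) := by
  have e1 : u₁ = fun x => A * (1 / Real.cosh (c * x)) := funext hu₁
  have e2 : u₂ = fun x => B * (1 / Real.cosh (c * x)) := funext hu₂
  subst e1 e2 hμ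
  constructor <;> intro x <;>
    simp only [sech_key] <;> set s := 1 / Real.cosh (c * x) with hs <;>
    [linear_combination (A * s ^ 3) * hABc; linear_combination (B * s ^ 3) * hABc]
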